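/- Let a, b, c be real quaternions and set d := a^2 + b·(star b) + a·(b + star b), where star denotes quaternion conjugation. If d ≠ 0, then x := d⁻¹·(a·c + c·star b) satisfies the Sylvester equation a·x + x·b = c. -/
import Mathlib

set_option maxHeartbeats 1600000 in
theorem quaternion_sylvester_left_solution (a b c : Quaternion ℝ)
    (hd : a ^ 2 + b * star b + a * (b + star b) ≠ 0) :
    a * ((a ^ 2 + b * star b + a * (b + star b))⁻¹ * (a * c + c * star b)) +
      ((a ^ 2 + b * star b + a * (b + star b))⁻¹ * (a * c + c * star b)) * b = c := by
  set d := a ^ 2 + b * star b + a * (b + star b) with hdef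
  have hb1 : b * star b = ((b * star b).re : Quaternion ℝ) := Quaternion.mul_star_eq_coe b
  have hb2 : b + star b = ((2 * b.re : ℝ) : Quaternion ℝ) := Quaternion.self_add_star' b
  have hcomm : Commute a d := by
    rw [hdef, hb1, hb2]
    exact (((Commute.refl a).pow_right 2).add_right
      (Quaternion.coe_commute _ a).symm).add_right
        ((Commute.refl a).mul_right (Quaternion.coe_commute _ a).symm)
  have hinv : a * d⁻¹ = d⁻¹ * a := hcomm.inv_right₀.eq
  rw [← mul_assoc, hinv, mul_assoc, mul_assoc, ← mul_add]
  have key : a * (a * c + c * star b) + (a * c + c * star b) * b = d * c := by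
    have h1 : c * star b * b = b * star b * c := by
      calc c * star b * b = c * (b * star b) := by rw [mul_assoc, star_comm_self']
        _ = c * ((b * star b).re : Quaternion ℝ) := by rw [← hb1]
        _ = ((b * star b).re : Quaternion ℝ) * c := (Quaternion.coe_commutes _ _).symm
        _ = b * star b * c := by rw [← hb1]
    have h2 : a * (c * star b) + a * c * b = a * ((b + star b) * c) := by
      rw [hb2, Quaternion.coe_commutes, ← hb2]
      noncomm_ring
    calc a * (a * c + c * star b) + (a * c + c * star b) * b
        = (a * (a * c) + (a * (c * star b) + a * c * b)) + c * star b * b := by noncomm_ring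
      _ = (a^2 * c + a * ((b + star b) * c)) + (b * star b) * c := by rw [h1, h2]; noncomm_ring
      _ = d * c := by rw [hdef]; noncomm_ring
  rw [key, ← mul_assoc, inv_mul_cancel₀ hd, one_mul]
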